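/- Lemma: Let P be a rook placement on a rectangular Ferrers board and a < b columns. If column a contains no square of P, then a←d_{a,b}(P) (the shifted sequence) is a longest decreasing sequence in P(a←d_{a,b}(P))|_{a,b}. If column b contains no square of P, then D_{a,b}(P)→b is a longest decreasing sequence in P(D_{a,b}(P)→b)|_{a,b}. -/

import Mathlib

open scoped Classical

/-- A cell (square) of the grid: `(column, row)`, both `≥ 1` for genuine cells. -/
abbrev Cell : Type := ℕ × ℕ

/-- The rectangle `R(a,b)` consisting of all cells `(i,j)` with `1 ≤ i ≤ a`, `1 ≤ j ≤ b`. -/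
def Rect (a b : ℕ) : Finset Cell := Finset.Icc 1 a ×ˢ Finset.Icc 1 b

/-- A Ferrers board (French notation): a down-left closed finite set of cells with
positive coordinates. -/
def IsFerrers (F : Finset Cell) : Prop :=
  ∀ p ∈ F, 1 ≤ p.1 ∧ 1 ≤ p.2 ∧
    ∀ q : Cell, 1 ≤ q.1 → 1 ≤ q.2 → q.1 ≤ p.1 → q.2 ≤ p.2 → q ∈ F

/-- A rook placement on a board `F`: a subset of `F` with at most one cell in each
column and at most one cell in each row. -/
def IsPlacement (F P : Finset Cell) : Prop :=
  P ⊆ F ∧ (∀ p ∈ P, ∀ q ∈ P, p.1 = q.1 → p = q) ∧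
    (∀ p ∈ P, ∀ q ∈ P, p.2 = q.2 → p = q)

/-- A decreasing sequence in `P`: columns strictly increase, rows strictly decrease. -/
def IsDecSeq (P : Finset Cell) (k : ℕ) (S : Fin k → Cell) : Prop :=
  (∀ i, S i ∈ P) ∧ ∀ i j : Fin k, i < j → (S i).1 < (S j).1 ∧ (S j).2 < (S i).2

/-- An increasing sequence in `P`: columns and rows both strictly increase. -/
def IsIncSeq (P : Finset Cell) (k : ℕ) (S : Fin k → Cell) : Prop :=
  (∀ i, S i ∈ P) ∧ ∀ i j : Fin k, i < j → (S i).1 < (S j).1 ∧ (S i).2 < (S j).2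

/-- Lexicographic comparison of two sequences of cells by their rows (values),
entry by entry from the left. -/
def rowLexLE (k : ℕ) (S T : Fin k → Cell) : Prop :=
  (∀ i, (S i).2 = (T i).2) ∨
    ∃ i : Fin k, (S i).2 < (T i).2 ∧ ∀ j : Fin k, j < i → (S j).2 = (T j).2

/-- The restriction `P|_{a,b}` of a placement to columns `a` through `b`. -/
def colRestrict (a b : ℕ) (P : Finset Cell) : Finset Cell :=
  P.filter fun p => a ≤ p.1 ∧ p.1 ≤ b

/-- The sequence obtained from `S = S₁…S_k` by the left shift towards column `a`:
`S_i` moves to the column of `S_{i-1}` for `i > 1`, and `S₁` moves to column `a`;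
rows are unchanged. -/
def shiftLSeq (a : ℕ) (k : ℕ) (S : Fin k → Cell) : Fin k → Cell := fun i =>
  (if 0 < i.1 then (S ⟨i.1 - 1, Nat.lt_of_le_of_lt (Nat.sub_le _ _) i.isLt⟩).1 else a,
    (S i).2)

/-- The sequence obtained from `S = S₁…S_k` by the right shift towards column `b`:
`S_i` moves to the column of `S_{i+1}` for `i < k`, and `S_k` moves to column `b`;
rows are unchanged. -/
def shiftRSeq (b : ℕ) (k : ℕ) (S : Fin k → Cell) : Fin k → Cell := fun i =>
  (if h : i.1 + 1 < k then (S ⟨i.1 + 1, h⟩).1 else b, (S i).2)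

/-- The left shift `P(a ← S)` of the subplacement `S` of `P` to column `a`. -/
def leftShift (a : ℕ) (k : ℕ) (S : Fin k → Cell) (P : Finset Cell) : Finset Cell :=
  (P \ Finset.image S Finset.univ) ∪ Finset.image (shiftLSeq a k S) Finset.univ

/-- The right shift `P(S → b)` of the subplacement `S` of `P` to column `b`. -/
def rightShift (b : ℕ) (k : ℕ) (S : Fin k → Cell) (P : Finset Cell) : Finset Cell :=
  (P \ Finset.image S Finset.univ) ∪ Finset.image (shiftRSeq b k S) Finset.univ

/-- `S` is a longest decreasing sequence in `P|_{a,b}`. -/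
def IsMaxDec (a b : ℕ) (P : Finset Cell) (k : ℕ) (S : Fin k → Cell) : Prop :=
  IsDecSeq (colRestrict a b P) k S ∧
    ∀ (l : ℕ) (T : Fin l → Cell), IsDecSeq (colRestrict a b P) l T → l ≤ k

/-- `S = d_{a,b}(P)`: the lexicographically value-smallest longest decreasing sequence
in `P|_{a,b}`. -/
def IsSmallestDec (a b : ℕ) (P : Finset Cell) (k : ℕ) (S : Fin k → Cell) : Prop :=
  IsMaxDec a b P k S ∧
    ∀ T : Fin k → Cell, IsDecSeq (colRestrict a b P) k T → rowLexLE k S T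

/-- `S = D_{a,b}(P)`: the lexicographically value-largest longest decreasing sequence
in `P|_{a,b}`. -/
def IsLargestDec (a b : ℕ) (P : Finset Cell) (k : ℕ) (S : Fin k → Cell) : Prop :=
  IsMaxDec a b P k S ∧
    ∀ T : Fin k → Cell, IsDecSeq (colRestrict a b P) k T → rowLexLE k T S

/-- `S` is a longest increasing sequence in `P|_{a,b}`. -/
def IsMaxInc (a b : ℕ) (P : Finset Cell) (k : ℕ) (S : Fin k → Cell) : Prop :=
  IsIncSeq (colRestrict a b P) k S ∧
    ∀ (l : ℕ) (T : Fin l → Cell), IsIncSeq (colRestrict a b P) l T → l ≤ k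

/-- `S = i_{a,b}(P)`: the lexicographically value-smallest longest increasing sequence
in `P|_{a,b}`. -/
def IsSmallestInc (a b : ℕ) (P : Finset Cell) (k : ℕ) (S : Fin k → Cell) : Prop :=
  IsMaxInc a b P k S ∧
    ∀ T : Fin k → Cell, IsIncSeq (colRestrict a b P) k T → rowLexLE k S T

/-- `S = I_{a,b}(P)`: the lexicographically value-largest longest increasing sequence
in `P|_{a,b}`. -/
def IsLargestInc (a b : ℕ) (P : Finset Cell) (k : ℕ) (S : Fin k → Cell) : Prop :=
  IsMaxInc a b P k S ∧
    ∀ T : Fin k → Cell, IsIncSeq (colRestrict a b P) k T → rowLexLE k T S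

namespace ShiftWork

def Rel (p q : Cell) : Prop := p.1 < q.1 ∧ q.2 < p.2

instance : IsTrans Cell Rel :=
  ⟨fun _ _ _ h1 h2 => ⟨h1.1.trans h2.1, h2.2.trans h1.2⟩⟩

lemma decseq_of_list (F : Finset Cell) (kk : ℕ) (W : List Cell) (hlen : W.length = kk)
    (hc : W.Chain' Rel) (hm : ∀ p ∈ W, p ∈ F) :
    IsDecSeq F kk (fun i : Fin kk => W[i.1]'(by omega)) := by
  constructor
  · intro i; exact hm _ (List.getElem_mem _)
  · intro i j hij
    exact List.pairwise_iff_getElem.mp (List.isChain_iff_pairwise.mp hc) i j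
      (by omega) (by omega) hij

lemma chain'_ofFn {kk : ℕ} (T : Fin kk → Cell) (F : Finset Cell)
    (h : IsDecSeq F kk T) : (List.ofFn T).Chain' Rel := by
  refine List.isChain_iff_getElem.mpr ?_
  intro i hi
  simp only [List.length_ofFn] at hi
  simp only [List.get_eq_getElem, List.getElem_ofFn]
  exact h.2 ⟨i, by omega⟩ ⟨i + 1, by omega⟩ (by simp [Fin.mk_lt_mk])

/-- Split off the last element together with the chain link to it. -/
lemma last_split (l : List Cell) (hne : l ≠ []) (hchain : l.Chain' Rel) :
    l.dropLast = [] ∨ ∃ h0 : l.dropLast ≠ [],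
      Rel (l.dropLast.getLast h0) (l.getLast hne) := by
  rcases eq_or_ne l.dropLast [] with h | h
  · exact Or.inl h
  · refine Or.inr ⟨h, ?_⟩
    have hsplit : l.dropLast ++ [l.getLast hne] = l := List.dropLast_append_getLast hne
    rw [← hsplit] at hchain
    have := (List.isChain_append.mp hchain).2.2
    exact this _ (by rw [List.getLast?_eq_getLast h]; exact Option.mem_some_iff.mpr rfl) _ (by simp)

lemma head_split (l : List Cell) (hne : l ≠ []) (hchain : l.Chain' Rel) :
    l.tail = [] ∨ ∃ h0 : l.tail ≠ [],
      Rel (l.head hne) (l.tail.head h0) := by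
  rcases eq_or_ne l.tail [] with h | h
  · exact Or.inl h
  · refine Or.inr ⟨h, ?_⟩
    have hsplit : l.head hne :: l.tail = l := List.cons_head_tail hne
    rw [← hsplit] at hchain
    have := (List.isChain_cons.mp hchain).1
    exact this _ (by rw [List.head?_eq_head h]; exact Option.mem_some_iff.mpr rfl)

/-- terminal run extraction -/
lemma split_terminal (p : Cell → Bool) (l : List Cell) (hne : l ≠ [])
    (hp : p (l.getLast hne) = true) :
    ∃ (l₀ R : List Cell) (hR : R ≠ []), l = l₀ ++ R ∧ (∀ x ∈ R, p x = true) ∧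
      (∀ h₀ : l₀ ≠ [], p (l₀.getLast h₀) = false) := by
  have hrne : l.reverse ≠ [] := by simpa using hne
  refine ⟨(l.reverse.dropWhile p).reverse, (l.reverse.takeWhile p).reverse, ?_, ?_, ?_, ?_⟩
  · intro hcon
    have hT : l.reverse.takeWhile p = [] := by simpa using congrArg List.reverse hcon
    have hD : l.reverse.dropWhile p = l.reverse := by
      have := List.takeWhile_append_dropWhile (p := p) (l := l.reverse)
      rw [hT] at this; simpa using this
    have h2 := List.head_dropWhile_not p (l := l.reverse) (by rw [hD]; exact hrne)
    have h3 : (l.reverse.dropWhile p).head (by rw [hD]; exact hrne) = l.getLast hne := by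
      have : (l.reverse).head hrne = l.getLast hne := List.head_reverse hrne
      simp only [hD]; exact this
    rw [h3] at h2; rw [hp] at h2; simp at h2
  · have := List.takeWhile_append_dropWhile (p := p) (l := l.reverse)
    calc l = l.reverse.reverse := by simp
    _ = (l.reverse.takeWhile p ++ l.reverse.dropWhile p).reverse := by rw [this]
    _ = (l.reverse.dropWhile p).reverse ++ (l.reverse.takeWhile p).reverse := by
        rw [List.reverse_append]
  · intro x hx
    exact List.mem_takeWhile_imp (by simpa using hx)
  · intro h₀
    have hDne : l.reverse.dropWhile p ≠ [] := by simpa using h₀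
    have h2 := List.head_dropWhile_not p (l := l.reverse) hDne
    have h3 : (l.reverse.dropWhile p).reverse.getLast h₀ =
        (l.reverse.dropWhile p).head hDne := by
      rw [List.getLast_reverse]
    rw [h3]
    simpa using h2

/-- initial run extraction -/
lemma split_initial (p : Cell → Bool) (l : List Cell) (hne : l ≠ [])
    (hp : p (l.head hne) = true) :
    ∃ (R T : List Cell) (hR : R ≠ []), l = R ++ T ∧ (∀ x ∈ R, p x = true) ∧
      (∀ hT : T ≠ [], p (T.head hT) = false) := by
  refine ⟨l.takeWhile p, l.dropWhile p, ?_, (List.takeWhile_append_dropWhile (p := p) (l := l)).symm, ?_, ?_⟩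
  · intro hcon
    have hD : l.dropWhile p = l := by
      have := List.takeWhile_append_dropWhile (p := p) (l := l)
      rw [hcon] at this; simpa using this
    have h2 := List.head_dropWhile_not p (l := l) (by rw [hD]; exact hne)
    have h3 : (l.dropWhile p).head (by rw [hD]; exact hne) = l.head hne := by
      simp only [hD]
    rw [h3, hp] at h2; simp at h2
  · intro x hx; exact List.mem_takeWhile_imp hx
  · intro hT; simpa using List.head_dropWhile_not p (l := l) hT

end ShiftWork

namespace ShiftWork

/-- Context bundling the placement and the fixed decreasing sequence `S`. -/
structure Ctx where
  P : Finset Cell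
  a : ℕ
  b : ℕ
  k : ℕ
  S : Fin k → Cell
  colinj : ∀ p ∈ P, ∀ q ∈ P, p.1 = q.1 → p = q
  rowinj : ∀ p ∈ P, ∀ q ∈ P, p.2 = q.2 → p = q
  Smem : ∀ t, S t ∈ colRestrict a b P
  Scol : ∀ {t u : Fin k}, t < u → (S t).1 < (S u).1
  Srow : ∀ {t u : Fin k}, t < u → (S u).2 < (S t).2
  maxL : ∀ (l : List Cell), l.Chain' Rel → (∀ p ∈ l, p ∈ colRestrict a b P) →
    l.length ≤ k

namespace Ctx

variable (C : Ctx)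

lemma SmemP (t : Fin C.k) : C.S t ∈ C.P := (Finset.mem_filter.mp (C.Smem t)).1

lemma Scol_ge (t : Fin C.k) : C.a ≤ (C.S t).1 := (Finset.mem_filter.mp (C.Smem t)).2.1

lemma Scol_lb (t : Fin C.k) : (C.S t).1 ≤ C.b := (Finset.mem_filter.mp (C.Smem t)).2.2

lemma Scol_le {t u : Fin C.k} (h : t ≤ u) : (C.S t).1 ≤ (C.S u).1 := by
  rcases eq_or_lt_of_le h with h | h
  · rw [h]
  · exact (C.Scol h).le

lemma Srow_le {t u : Fin C.k} (h : t ≤ u) : (C.S u).2 ≤ (C.S t).2 := by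
  rcases eq_or_lt_of_le h with h | h
  · rw [h]
  · exact (C.Srow h).le

lemma Scol_reflect {t u : Fin C.k} (h : (C.S t).1 < (C.S u).1) : t < u := by
  by_contra hc
  exact absurd (C.Scol_le (not_lt.mp hc)) (by omega)

lemma Srow_reflect {t u : Fin C.k} (h : (C.S u).2 < (C.S t).2) : t < u := by
  by_contra hc
  exact absurd (C.Srow_le (not_lt.mp hc)) (by omega)

lemma Sinj {t u : Fin C.k} (h : C.S t = C.S u) : t = u := by
  rcases lt_trichotomy t u with h1 | h1 | h1
  · exact absurd (C.Scol h1) (by rw [h]; omega)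
  · exact h1
  · exact absurd (C.Scol h1) (by rw [h]; omega)

/-- Index of the first column of `S` to the right of `x` (or `k`). -/
noncomputable def iIdx (x : Cell) : ℕ :=
  Nat.find (p := fun t => C.k ≤ t ∨ ∃ h : t < C.k, x.1 < (C.S ⟨t, h⟩).1)
    ⟨C.k, Or.inl le_rfl⟩

/-- Index of the first row of `S` below `x` (or `k`). -/
noncomputable def jIdx (x : Cell) : ℕ :=
  Nat.find (p := fun t => C.k ≤ t ∨ ∃ h : t < C.k, (C.S ⟨t, h⟩).2 < x.2)
    ⟨C.k, Or.inl le_rfl⟩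

variable {C}

lemma iIdx_le (x : Cell) : C.iIdx x ≤ C.k := Nat.find_le (Or.inl le_rfl)

lemma jIdx_le (x : Cell) : C.jIdx x ≤ C.k := Nat.find_le (Or.inl le_rfl)

lemma iIdx_spec {x : Cell} (h : C.iIdx x < C.k) : x.1 < (C.S ⟨C.iIdx x, h⟩).1 := by
  have : C.k ≤ C.iIdx x ∨ ∃ h' : C.iIdx x < C.k, x.1 < (C.S ⟨C.iIdx x, h'⟩).1 :=
    Nat.find_spec (p := fun t => C.k ≤ t ∨ ∃ h : t < C.k, x.1 < (C.S ⟨t, h⟩).1)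
      ⟨C.k, Or.inl le_rfl⟩
  rcases this with h1 | ⟨h1, h2⟩
  · omega
  · exact h2

lemma jIdx_spec {x : Cell} (h : C.jIdx x < C.k) : (C.S ⟨C.jIdx x, h⟩).2 < x.2 := by
  have : C.k ≤ C.jIdx x ∨ ∃ h' : C.jIdx x < C.k, (C.S ⟨C.jIdx x, h'⟩).2 < x.2 :=
    Nat.find_spec (p := fun t => C.k ≤ t ∨ ∃ h : t < C.k, (C.S ⟨t, h⟩).2 < x.2)
      ⟨C.k, Or.inl le_rfl⟩
  rcases this with h1 | ⟨h1, h2⟩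
  · omega
  · exact h2

lemma iIdx_gt {x : Cell} {t : ℕ} (ht : t < C.iIdx x) :
    ∃ h : t < C.k, (C.S ⟨t, h⟩).1 ≤ x.1 := by
  have hmin := Nat.find_min (p := fun t => C.k ≤ t ∨ ∃ h : t < C.k, x.1 < (C.S ⟨t, h⟩).1)
    ⟨C.k, Or.inl le_rfl⟩ ht
  have h1 : t < C.k := by by_contra hc; exact hmin (Or.inl (by omega))
  refine ⟨h1, ?_⟩
  by_contra hc
  exact hmin (Or.inr ⟨h1, by omega⟩)

lemma jIdx_gt {x : Cell} {t : ℕ} (ht : t < C.jIdx x) :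
    ∃ h : t < C.k, x.2 ≤ (C.S ⟨t, h⟩).2 := by
  have hmin := Nat.find_min (p := fun t => C.k ≤ t ∨ ∃ h : t < C.k, (C.S ⟨t, h⟩).2 < x.2)
    ⟨C.k, Or.inl le_rfl⟩ ht
  have h1 : t < C.k := by by_contra hc; exact hmin (Or.inl (by omega))
  refine ⟨h1, ?_⟩
  by_contra hc
  exact hmin (Or.inr ⟨h1, by omega⟩)

lemma iIdx_le_of {x : Cell} {t : ℕ} (h : t < C.k) (hx : x.1 < (C.S ⟨t, h⟩).1) :
    C.iIdx x ≤ t := Nat.find_le (Or.inr ⟨h, hx⟩)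

lemma jIdx_le_of {x : Cell} {t : ℕ} (h : t < C.k) (hx : (C.S ⟨t, h⟩).2 < x.2) :
    C.jIdx x ≤ t := Nat.find_le (Or.inr ⟨h, hx⟩)

lemma le_iIdx {x : Cell} {L : ℕ} (hL : L ≤ C.k)
    (h : ∀ t (ht : t < L), (C.S ⟨t, by omega⟩).1 ≤ x.1) : L ≤ C.iIdx x := by
  apply (Nat.le_find_iff _ _).mpr
  intro t ht hcon
  rcases hcon with h1 | ⟨h1, h2⟩
  · omega
  · exact absurd (h t ht) (by omega)

lemma le_jIdx {x : Cell} {L : ℕ} (hL : L ≤ C.k)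
    (h : ∀ t (ht : t < L), x.2 ≤ (C.S ⟨t, by omega⟩).2) : L ≤ C.jIdx x := by
  apply (Nat.le_find_iff _ _).mpr
  intro t ht hcon
  rcases hcon with h1 | ⟨h1, h2⟩
  · omega
  · exact absurd (h t ht) (by omega)

lemma iIdx_mono {x y : Cell} (h : x.1 ≤ y.1) : C.iIdx x ≤ C.iIdx y := by
  apply Nat.find_mono
  rintro t (h1 | ⟨h1, h2⟩)
  · exact Or.inl h1
  · exact Or.inr ⟨h1, by omega⟩

lemma jIdx_anti {x y : Cell} (h : y.2 ≤ x.2) : C.jIdx x ≤ C.jIdx y := by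
  apply Nat.find_mono
  rintro t (h1 | ⟨h1, h2⟩)
  · exact Or.inl h1
  · exact Or.inr ⟨h1, by omega⟩

/-- Cells of the restricted placement which are not cells of `S`. -/
def OldN (x : Cell) : Prop :=
  x ∈ colRestrict C.a C.b C.P ∧ ∀ t : Fin C.k, x ≠ C.S t

lemma OldN.memP {x : Cell} (hx : C.OldN x) : x ∈ C.P := (Finset.mem_filter.mp hx.1).1

lemma col_ne {x : Cell} (hx : C.OldN x) (t : Fin C.k) : x.1 ≠ (C.S t).1 := by
  intro h
  exact hx.2 t (C.colinj x hx.memP (C.S t) (C.SmemP t) h)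

lemma row_ne {x : Cell} (hx : C.OldN x) (t : Fin C.k) : x.2 ≠ (C.S t).2 := by
  intro h
  exact hx.2 t (C.rowinj x hx.memP (C.S t) (C.SmemP t) h)

lemma iIdx_gt_strict {x : Cell} (hx : C.OldN x) {t : ℕ} (ht : t < C.iIdx x) :
    ∃ h : t < C.k, (C.S ⟨t, h⟩).1 < x.1 := by
  obtain ⟨h, h2⟩ := iIdx_gt ht
  exact ⟨h, lt_of_le_of_ne h2 (fun hc => C.col_ne hx ⟨t, h⟩ hc.symm)⟩

lemma jIdx_gt_strict {x : Cell} (hx : C.OldN x) {t : ℕ} (ht : t < C.jIdx x) :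
    ∃ h : t < C.k, x.2 < (C.S ⟨t, h⟩).2 := by
  obtain ⟨h, h2⟩ := jIdx_gt ht
  exact ⟨h, lt_of_le_of_ne h2 (C.row_ne hx ⟨t, h⟩)⟩

end Ctx

end ShiftWork

namespace ShiftWork

namespace Ctx

variable (C : Ctx)

def Slist : List Cell := List.ofFn C.S

@[simp] lemma Slist_length : C.Slist.length = C.k := by simp [Slist]

lemma Slist_getElem {t : ℕ} (h : t < C.Slist.length) :
    C.Slist[t] = C.S ⟨t, by simpa using h⟩ := by
  simp [Slist]

lemma Slist_chain : C.Slist.Chain' Rel := by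
  refine List.isChain_iff_getElem.mpr ?_
  intro i hi
  simp only [Slist_length] at hi
  simp only [List.get_eq_getElem, Slist_getElem]
  exact ⟨C.Scol (by simp [Fin.mk_lt_mk]), C.Srow (by simp [Fin.mk_lt_mk])⟩

lemma Slist_mem {p : Cell} (h : p ∈ C.Slist) : p ∈ colRestrict C.a C.b C.P := by
  simp only [Slist, List.mem_ofFn] at h
  obtain ⟨t, rfl⟩ := h
  exact C.Smem t

variable {C}

/-- The sandwich list `S₀…S_{α-1} ++ mid ++ S_β…S_{k-1}` : chain + properties. -/
lemma sandwich_core (α β : ℕ) (hα : α ≤ C.k) (hβ : β ≤ C.k)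
    (mid : List Cell) (hmne : mid ≠ [])
    (hmc : mid.Chain' Rel) (hmm : ∀ p ∈ mid, p ∈ colRestrict C.a C.b C.P)
    (hL : ∀ _ : 0 < α, Rel (C.S ⟨α - 1, by omega⟩) (mid.head hmne))
    (hR : ∀ hb : β < C.k, Rel (mid.getLast hmne) (C.S ⟨β, hb⟩)) :
    ∃ W : List Cell, W.Chain' Rel ∧ (∀ p ∈ W, p ∈ colRestrict C.a C.b C.P) ∧
      W.length = α + mid.length + (C.k - β) ∧
      (∀ t (ht : t < α) (h2 : t < W.length), W[t] = C.S ⟨t, by omega⟩) ∧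
      (∀ h2 : α < W.length, W[α] = mid.head hmne) := by
  refine ⟨C.Slist.take α ++ (mid ++ C.Slist.drop β), ?_, ?_, ?_, ?_, ?_⟩
  · -- chain
    apply List.IsChain.append
    · exact C.Slist_chain.sublist (List.take_sublist _ _)
    · apply List.IsChain.append hmc (C.Slist_chain.sublist (List.drop_sublist _ _))
      intro x hx y hy
      rw [List.getLast?_eq_getLast hmne, Option.mem_some_iff] at hx
      have hdl : (C.Slist.drop β).length = C.k - β := by simp
      have hdne : C.Slist.drop β ≠ [] := by
        intro hc
        rw [hc] at hy; simp at hy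
      have hblt : β < C.k := by
        by_contra hc
        exact hdne (List.eq_nil_of_length_eq_zero (by omega))
      rw [List.head?_eq_head hdne, Option.mem_some_iff] at hy
      subst hy; subst hx
      have hyv : (List.drop β C.Slist).head hdne = C.S ⟨β, hblt⟩ := by
        rw [← List.getElem_zero (by omega)]
        rw [List.getElem_drop]
        rw [C.Slist_getElem]
        congr 1
      rw [hyv]
      exact hR hblt
    · intro x hx y hy
      have htne : C.Slist.take α ≠ [] := by
        intro hc
        rw [hc] at hx; simp at hx
      have h0α : 0 < α := by
        by_contra hc
        have : (C.Slist.take α).length = 0 := by simp; omega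
        exact htne (List.eq_nil_of_length_eq_zero this)
      have hlt : (C.Slist.take α).length = α := by simp; omega
      rw [List.getLast?_eq_getLast htne, Option.mem_some_iff] at hx
      subst hx
      have hmidne : mid ++ C.Slist.drop β ≠ [] := by
        intro hc
        exact hmne (List.append_eq_nil_iff.mp hc).1
      rw [List.head?_eq_head hmidne, Option.mem_some_iff] at hy
      subst hy
      have hxv : (List.take α C.Slist).getLast htne = C.S ⟨α - 1, by omega⟩ := by
        rw [List.getLast_eq_getElem]
        rw [List.getElem_take, C.Slist_getElem]
        congr 1
        simp [hlt]
      have hyv : (mid ++ C.Slist.drop β).head hmidne = mid.head hmne := by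
        rw [List.head_append_of_ne_nil]
      rw [hxv, hyv]
      exact hL h0α
  · intro p hp
    rcases List.mem_append.mp hp with h | h
    · exact C.Slist_mem ((List.take_sublist _ _).subset h)
    rcases List.mem_append.mp h with h | h
    · exact hmm p h
    · exact C.Slist_mem ((List.drop_sublist _ _).subset h)
  · simp; omega
  · intro t ht h2
    have h3 : t < (C.Slist.take α).length := by simp; omega
    rw [List.getElem_append_left h3, List.getElem_take]
    exact C.Slist_getElem _
  · intro h2
    have hlt : (C.Slist.take α).length = α := by simp; omega
    rw [List.getElem_append_right (by omega)]
    have h0 : α - (C.Slist.take α).length = 0 := by omega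
    simp only [h0]
    rw [List.getElem_append_left (by rw [List.length_pos_iff]; exact hmne)]
    exact List.getElem_zero _

/-- Maximality applied to a sandwich. -/
lemma sandwich_bound (α β : ℕ) (hα : α ≤ C.k) (hβ : β ≤ C.k)
    (mid : List Cell) (hmne : mid ≠ [])
    (hmc : mid.Chain' Rel) (hmm : ∀ p ∈ mid, p ∈ colRestrict C.a C.b C.P)
    (hL : ∀ _ : 0 < α, Rel (C.S ⟨α - 1, by omega⟩) (mid.head hmne))
    (hR : ∀ hb : β < C.k, Rel (mid.getLast hmne) (C.S ⟨β, hb⟩)) :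
    α + mid.length + (C.k - β) ≤ C.k := by
  obtain ⟨W, hWc, hWm, hWl, -, -⟩ := sandwich_core α β hα hβ mid hmne hmc hmm hL hR
  have := C.maxL W hWc hWm
  omega

/-- Lex-minimality of `S`, reformulated. -/
def FlexS : Prop :=
  ∀ (T : Fin C.k → Cell), IsDecSeq (colRestrict C.a C.b C.P) C.k T →
    ∀ (α : Fin C.k), (∀ t, t < α → T t = C.S t) → ¬ ((T α).2 < (C.S α).2)

/-- Lex-maximality of `S`, reformulated. -/
def FlexD : Prop :=
  ∀ (T : Fin C.k → Cell), IsDecSeq (colRestrict C.a C.b C.P) C.k T →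
    ∀ (α : Fin C.k), (∀ t, t < α → T t = C.S t) → ¬ ((C.S α).2 < (T α).2)

lemma sandwich_shaveS (hflex : C.FlexS) (α β : ℕ) (hαk : α < C.k) (hβ : β ≤ C.k)
    (mid : List Cell) (hmne : mid ≠ [])
    (hmc : mid.Chain' Rel) (hmm : ∀ p ∈ mid, p ∈ colRestrict C.a C.b C.P)
    (hL : ∀ _ : 0 < α, Rel (C.S ⟨α - 1, by omega⟩) (mid.head hmne))
    (hR : ∀ hb : β < C.k, Rel (mid.getLast hmne) (C.S ⟨β, hb⟩))
    (hdip : (mid.head hmne).2 < (C.S ⟨α, hαk⟩).2) :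
    α + mid.length + (C.k - β) + 1 ≤ C.k := by
  obtain ⟨W, hWc, hWm, hWl, hWpre, hWα⟩ :=
    sandwich_core α β (by omega) hβ mid hmne hmc hmm hL hR
  have hle := C.maxL W hWc hWm
  by_contra hcon
  have hWk : W.length = C.k := by omega
  have hT := decseq_of_list _ C.k W hWk hWc hWm
  refine hflex _ hT ⟨α, hαk⟩ ?_ ?_
  · intro t hlt
    have h1 : t.1 < α := hlt
    have := hWpre t.1 h1 (by omega)
    simp only [this]
  · have := hWα (by omega)
    simp only [this]
    exact hdip

lemma sandwich_shaveD (hflex : C.FlexD) (α β : ℕ) (hαk : α < C.k) (hβ : β ≤ C.k)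
    (mid : List Cell) (hmne : mid ≠ [])
    (hmc : mid.Chain' Rel) (hmm : ∀ p ∈ mid, p ∈ colRestrict C.a C.b C.P)
    (hL : ∀ _ : 0 < α, Rel (C.S ⟨α - 1, by omega⟩) (mid.head hmne))
    (hR : ∀ hb : β < C.k, Rel (mid.getLast hmne) (C.S ⟨β, hb⟩))
    (hdip : (C.S ⟨α, hαk⟩).2 < (mid.head hmne).2) :
    α + mid.length + (C.k - β) + 1 ≤ C.k := by
  obtain ⟨W, hWc, hWm, hWl, hWpre, hWα⟩ :=
    sandwich_core α β (by omega) hβ mid hmne hmc hmm hL hR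
  have hle := C.maxL W hWc hWm
  by_contra hcon
  have hWk : W.length = C.k := by omega
  have hT := decseq_of_list _ C.k W hWk hWc hWm
  refine hflex _ hT ⟨α, hαk⟩ ?_ ?_
  · intro t hlt
    have h1 : t.1 < α := hlt
    have := hWpre t.1 h1 (by omega)
    simp only [this]
  · have := hWα (by omega)
    simp only [this]
    exact hdip

/-- No old non-S cell sits in the "slot" `j = i`. -/
lemma SvalEq {u v : ℕ} (h : u = v) {hu : u < C.k} {hv : v < C.k} :
    C.S ⟨u, hu⟩ = C.S ⟨v, hv⟩ := by subst h; rfl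

lemma FD1 {x : Cell} (hx : C.OldN x) : C.jIdx x ≠ C.iIdx x := by
  intro heq
  set i := C.iIdx x with hi
  have hik : i ≤ C.k := iIdx_le x
  have hbound := sandwich_bound (C := C) i i hik hik [x] (by simp)
    (List.isChain_singleton x) (by intro p hp; rw [List.mem_singleton] at hp; rw [hp]; exact hx.1)
    ?_ ?_
  · simp at hbound; omega
  · intro h0
    simp only [List.head_cons]
    obtain ⟨h1, h2⟩ := C.iIdx_gt_strict hx (show i - 1 < C.iIdx x by omega)
    obtain ⟨h3, h4⟩ := C.jIdx_gt_strict hx (show i - 1 < C.jIdx x by omega)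
    exact ⟨h2, h4⟩
  · intro hb
    simp only [List.getLast_singleton]
    have h2 := iIdx_spec (C := C) (x := x) hb
    have h4 : (C.S ⟨C.jIdx x, by omega⟩).2 < x.2 := jIdx_spec (by omega)
    rw [C.SvalEq heq (hv := hb)] at h4
    exact ⟨h2, h4⟩

/-- d-case: no old non-S cell sits in the slot `j = i + 1`. -/
lemma FD2d (hflex : C.FlexS) {x : Cell} (hx : C.OldN x) : C.jIdx x ≠ C.iIdx x + 1 := by
  intro heq
  set i := C.iIdx x with hi
  have hik : i < C.k := by
    have := jIdx_le (C := C) x; omega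
  have hbound := sandwich_shaveS hflex i (i+1) hik (by omega) [x] (by simp)
    (List.isChain_singleton x) (by intro p hp; rw [List.mem_singleton] at hp; rw [hp]; exact hx.1)
    ?_ ?_ ?_
  · simp at hbound; omega
  · intro h0
    simp only [List.head_cons]
    obtain ⟨h1, h2⟩ := C.iIdx_gt_strict hx (show i - 1 < C.iIdx x by omega)
    obtain ⟨h3, h4⟩ := C.jIdx_gt_strict hx (show i - 1 < C.jIdx x by omega)
    exact ⟨h2, h4⟩
  · intro hb
    simp only [List.getLast_singleton]
    constructor
    · calc x.1 < (C.S ⟨i, hik⟩).1 := iIdx_spec hik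
      _ < (C.S ⟨i+1, hb⟩).1 := C.Scol (by simp [Fin.mk_lt_mk])
    · have h4 : (C.S ⟨C.jIdx x, by omega⟩).2 < x.2 := jIdx_spec (by omega)
      rw [C.SvalEq heq (hv := hb)] at h4
      exact h4
  · simp only [List.head_cons]
    obtain ⟨h3, h4⟩ := C.jIdx_gt_strict hx (show i < C.jIdx x by omega)
    exact h4

/-- D-case: no old non-S cell sits in the slot `j = i - 1`. -/
lemma FD2D (hflex : C.FlexD) {x : Cell} (hx : C.OldN x) : C.iIdx x ≠ C.jIdx x + 1 := by
  intro heq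
  set j := C.jIdx x with hj
  have hik : C.iIdx x ≤ C.k := iIdx_le x
  have hjk : j < C.k := by omega
  have hbound := sandwich_shaveD hflex j (j+1) hjk (by omega) [x] (by simp)
    (List.isChain_singleton x) (by intro p hp; rw [List.mem_singleton] at hp; rw [hp]; exact hx.1)
    ?_ ?_ ?_
  · simp at hbound; omega
  · intro h0
    simp only [List.head_cons]
    obtain ⟨h1, h2⟩ := C.iIdx_gt_strict hx (show j - 1 < C.iIdx x by omega)
    obtain ⟨h3, h4⟩ := C.jIdx_gt_strict hx (show j - 1 < C.jIdx x by omega)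
    exact ⟨h2, h4⟩
  · intro hb
    simp only [List.getLast_singleton]
    constructor
    · have h2 : x.1 < (C.S ⟨C.iIdx x, by omega⟩).1 := iIdx_spec (by omega)
      rw [C.SvalEq heq (hv := hb)] at h2
      exact h2
    · calc (C.S ⟨j+1, hb⟩).2 < (C.S ⟨j, hjk⟩).2 := C.Srow (by simp [Fin.mk_lt_mk])
      _ < x.2 := jIdx_spec hjk
  · simp only [List.head_cons]
    exact jIdx_spec hjk

end Ctx

end ShiftWork

namespace ShiftWork

namespace Ctx

variable (C : Ctx)

/-! ### d-case : left shift -/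

/-- The left-shifted sequence. -/
noncomputable def NL : Fin C.k → Cell := shiftLSeq C.a C.k C.S

lemma NLrow (μ : Fin C.k) : (C.NL μ).2 = (C.S μ).2 := rfl

lemma NLcol0 {μ : Fin C.k} (h : μ.1 = 0) : (C.NL μ).1 = C.a := by
  simp [NL, shiftLSeq, h]

lemma NLcolpos {μ : Fin C.k} (h : 0 < μ.1) :
    (C.NL μ).1 = (C.S ⟨μ.1 - 1, by omega⟩).1 := by
  simp [NL, shiftLSeq, h]

variable {C}

lemma NL_inj {μ μ' : Fin C.k} (h : C.NL μ = C.NL μ') : μ = μ' := by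
  have h2 : (C.S μ).2 = (C.S μ').2 := by
    have := congrArg Prod.snd h
    rwa [C.NLrow, C.NLrow] at this
  rcases lt_trichotomy μ μ' with h1 | h1 | h1
  · exact absurd (C.Srow h1) (by omega)
  · exact h1
  · exact absurd (C.Srow h1) (by omega)

lemma NL_ne_S (hfree : ∀ p ∈ C.P, p.1 ≠ C.a) (μ t : Fin C.k) : C.NL μ ≠ C.S t := by
  intro h
  rcases Nat.eq_zero_or_pos μ.1 with h0 | hpos
  · have hcol : (C.S t).1 = C.a := by rw [← h, C.NLcol0 h0]
    exact hfree _ (C.SmemP t) hcol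
  · have hcol : (C.S t).1 = (C.S ⟨μ.1 - 1, by omega⟩).1 := by
      rw [← h, C.NLcolpos hpos]
    have ht : t = ⟨μ.1 - 1, by omega⟩ := by
      rcases lt_trichotomy t ⟨μ.1 - 1, by omega⟩ with h1 | h1 | h1
      · exact absurd (C.Scol h1) (by omega)
      · exact h1
      · exact absurd (C.Scol h1) (by omega)
    have hrow : (C.S μ).2 = (C.S t).2 := by rw [← h]; rfl
    rw [ht] at hrow
    have : μ ≠ (⟨μ.1 - 1, by omega⟩ : Fin C.k) := by
      intro hc
      have := congrArg Fin.val hc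
      simp at this; omega
    rcases lt_or_gt_of_ne this with h1 | h1
    · exact absurd (C.Srow h1) (by omega)
    · exact absurd (C.Srow h1) (by omega)

lemma NL_notin (hfree : ∀ p ∈ C.P, p.1 ≠ C.a) (μ : Fin C.k) :
    C.NL μ ∉ colRestrict C.a C.b C.P := by
  intro hmem
  have hP : C.NL μ ∈ C.P := (Finset.mem_filter.mp hmem).1
  rcases Nat.eq_zero_or_pos μ.1 with h0 | hpos
  · exact hfree _ hP (C.NLcol0 h0)
  · have hcol : (C.NL μ).1 = (C.S ⟨μ.1 - 1, by omega⟩).1 := C.NLcolpos hpos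
    have := C.colinj _ hP _ (C.SmemP ⟨μ.1 - 1, by omega⟩) hcol
    exact NL_ne_S hfree μ ⟨μ.1 - 1, by omega⟩ this

/-- Ground set for the d-case chains. -/
def QL (C : Ctx) (x : Cell) : Prop :=
  x ∈ colRestrict C.a C.b C.P ∨ ∃ μ : Fin C.k, x = C.NL μ

lemma QL_col_ge {x : Cell} (hx : C.QL x) : C.a ≤ x.1 := by
  rcases hx with h | ⟨μ, rfl⟩
  · exact (Finset.mem_filter.mp h).2.1
  · rcases Nat.eq_zero_or_pos μ.1 with h0 | hpos
    · rw [C.NLcol0 h0]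
    · rw [C.NLcolpos hpos]
      exact C.Scol_ge _

lemma QL_trichotomy (hfree : ∀ p ∈ C.P, p.1 ≠ C.a) {x : Cell} (hx : C.QL x) :
    (∃ μ : Fin C.k, x = C.NL μ) ∨ (∃ t : Fin C.k, x = C.S t) ∨ C.OldN x := by
  rcases hx with h | h
  · by_cases hS : ∃ t : Fin C.k, x = C.S t
    · exact Or.inr (Or.inl hS)
    · push_neg at hS
      exact Or.inr (Or.inr ⟨h, hS⟩)
  · exact Or.inl h

variable (C)

/-- Bound assigned to the last cell of a d-case chain. -/
noncomputable def dBound (x : Cell) : ℕ :=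
  if h : ∃ μ : Fin C.k, x = C.NL μ then h.choose.1 + 1
  else if h2 : ∃ t : Fin C.k, x = C.S t then h2.choose.1 + 1
  else if C.jIdx x < C.iIdx x then C.iIdx x else C.jIdx x

variable {C}

lemma dBound_new {x : Cell} (μ : Fin C.k) (hx : x = C.NL μ) : C.dBound x = μ.1 + 1 := by
  have h : ∃ μ : Fin C.k, x = C.NL μ := ⟨μ, hx⟩
  rw [dBound, dif_pos h]
  have := h.choose_spec
  have : h.choose = μ := NL_inj (by rw [← this, ← hx])
  rw [this]

lemma dBound_S (hfree : ∀ p ∈ C.P, p.1 ≠ C.a) {x : Cell} (t : Fin C.k)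
    (hx : x = C.S t) : C.dBound x = t.1 + 1 := by
  have hnot : ¬ ∃ μ : Fin C.k, x = C.NL μ := by
    rintro ⟨μ, hμ⟩
    exact NL_ne_S hfree μ t (by rw [← hμ, hx])
  have h2 : ∃ u : Fin C.k, x = C.S u := ⟨t, hx⟩
  rw [dBound, dif_neg hnot, dif_pos h2]
  have := h2.choose_spec
  have : h2.choose = t := C.Sinj (by rw [← this, ← hx])
  rw [this]

lemma dBound_old (hfree : ∀ p ∈ C.P, p.1 ≠ C.a) {x : Cell} (hx : C.OldN x) :
    C.dBound x = if C.jIdx x < C.iIdx x then C.iIdx x else C.jIdx x := by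
  have hnot : ¬ ∃ μ : Fin C.k, x = C.NL μ := by
    rintro ⟨μ, hμ⟩
    exact NL_notin hfree μ (hμ ▸ hx.1)
  have hnot2 : ¬ ∃ t : Fin C.k, x = C.S t := by
    rintro ⟨t, ht⟩
    exact hx.2 t ht
  rw [dBound, dif_neg hnot, dif_neg hnot2]

lemma dBound_le_k (hfree : ∀ p ∈ C.P, p.1 ≠ C.a) {x : Cell} (hx : C.QL x) :
    C.dBound x ≤ C.k := by
  rcases QL_trichotomy hfree hx with ⟨μ, h⟩ | ⟨t, h⟩ | h
  · rw [dBound_new μ h]; omega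
  · rw [dBound_S hfree t h]; omega
  · rw [dBound_old hfree h]
    split
    · exact iIdx_le x
    · exact jIdx_le x

lemma low_sharp (hflex : C.FlexS) {x : Cell} (hx : C.OldN x)
    (h : ¬ C.jIdx x < C.iIdx x) : C.iIdx x + 2 ≤ C.jIdx x := by
  have h1 := C.FD1 hx
  have h2 := FD2d hflex hx
  omega

end Ctx

end ShiftWork

namespace ShiftWork

namespace Ctx

variable {C : Ctx}

lemma dMain (hfree : ∀ p ∈ C.P, p.1 ≠ C.a) (hflex : C.FlexS) :
    ∀ (nn : ℕ) (l : List Cell), l.length ≤ nn → l.Chain' Rel →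
      (∀ p ∈ l, C.QL p) → ∀ hne : l ≠ [],
      l.length ≤ C.dBound (l.getLast hne) := by
  intro nn
  induction nn with
  | zero =>
    intro l hl _ _ hne
    exact absurd (List.length_eq_zero_iff.mp (Nat.le_zero.mp hl)) hne
  | succ nn ih =>
    intro l hlen hchain hmem hne
    have hpos : 0 < l.length := List.length_pos_iff.mpr hne
    have hxQ := hmem _ (List.getLast_mem hne)
    rcases C.QL_trichotomy hfree hxQ with ⟨μ, hxN⟩ | ⟨t, hxS⟩ | hxO
    -- ===== case: last cell is a new cell =====
    · rw [dBound_new μ hxN]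
      rcases last_split l hne hchain with h0 | ⟨h0, hrel⟩
      · have h1 := List.length_dropLast (xs := l)
        rw [h0] at h1; simp at h1; omega
      · rw [hxN] at hrel
        have hwQ : C.QL _ := hmem _ ((List.dropLast_sublist l).subset (List.getLast_mem h0))
        have hdl : l.dropLast.length = l.length - 1 := List.length_dropLast (xs := l)
        have hIH := ih l.dropLast (by omega)
          (hchain.sublist (List.dropLast_sublist l))
          (fun p hp => hmem p ((List.dropLast_sublist l).subset hp)) h0
        rcases Nat.eq_zero_or_pos μ.1 with hμ0 | hμpos
        · exfalso
          have h2 := C.QL_col_ge hwQ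
          have h3 := hrel.1
          rw [C.NLcol0 hμ0] at h3
          omega
        · have hxcol := C.NLcolpos hμpos
          suffices hsuff : C.dBound (l.dropLast.getLast h0) ≤ μ.1 by omega
          rcases C.QL_trichotomy hfree hwQ with ⟨μ', hwN⟩ | ⟨u, hwS⟩ | hwO
          · rw [dBound_new μ' hwN]
            rcases Nat.eq_zero_or_pos μ'.1 with h0' | hpos'
            · omega
            · have h1 : (C.S ⟨μ'.1 - 1, by omega⟩).1 < (C.S ⟨μ.1 - 1, by omega⟩).1 := by
                have h2 := hrel.1
                rw [hxcol, hwN, C.NLcolpos hpos'] at h2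
                exact h2
              have h2 := C.Scol_reflect h1
              rw [Fin.mk_lt_mk] at h2
              omega
          · rw [dBound_S hfree u hwS]
            have h1 : (C.S u).1 < (C.S ⟨μ.1 - 1, by omega⟩).1 := by
              have h2 := hrel.1
              rw [hxcol, hwS] at h2
              exact h2
            have h2 : u.1 < μ.1 - 1 := C.Scol_reflect h1
            omega
          · rw [dBound_old hfree hwO]
            split
            · have h1 : C.iIdx (l.dropLast.getLast h0) ≤ μ.1 - 1 :=
                C.iIdx_le_of (by omega) (by
                  have h2 := hrel.1; rw [hxcol] at h2; exact h2)
              omega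
            · have h1 : C.jIdx (l.dropLast.getLast h0) ≤ μ.1 :=
                C.jIdx_le_of μ.isLt (by
                  have h2 := hrel.2
                  have h3 : (C.NL μ).2 = (C.S μ).2 := C.NLrow μ
                  rw [h3] at h2
                  exact h2)
              omega
    -- ===== case: last cell is a cell of S =====
    · rw [dBound_S hfree t hxS]
      rcases last_split l hne hchain with h0 | ⟨h0, hrel⟩
      · have h1 := List.length_dropLast (xs := l)
        rw [h0] at h1; simp at h1; omega
      · rw [hxS] at hrel
        have hwQ : C.QL _ := hmem _ ((List.dropLast_sublist l).subset (List.getLast_mem h0))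
        have hdl : l.dropLast.length = l.length - 1 := List.length_dropLast (xs := l)
        have hIH := ih l.dropLast (by omega)
          (hchain.sublist (List.dropLast_sublist l))
          (fun p hp => hmem p ((List.dropLast_sublist l).subset hp)) h0
        suffices hsuff : C.dBound (l.dropLast.getLast h0) ≤ t.1 by omega
        rcases C.QL_trichotomy hfree hwQ with ⟨μ', hwN⟩ | ⟨u, hwS⟩ | hwO
        · rw [dBound_new μ' hwN]
          have h1 : (C.S t).2 < (C.S μ').2 := by
            have h2 := hrel.2
            rw [hwN] at h2
            have h3 : (C.NL μ').2 = (C.S μ').2 := C.NLrow μ'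
            rw [h3] at h2
            exact h2
          have h2 : μ'.1 < t.1 := C.Srow_reflect h1
          omega
        · rw [dBound_S hfree u hwS]
          have h1 : (C.S u).1 < (C.S t).1 := by
            have h2 := hrel.1
            rw [hwS] at h2
            exact h2
          have h2 : u.1 < t.1 := C.Scol_reflect h1
          omega
        · rw [dBound_old hfree hwO]
          split
          · have h1 : C.iIdx (l.dropLast.getLast h0) ≤ t.1 :=
              C.iIdx_le_of t.isLt hrel.1
            omega
          · have h1 : C.jIdx (l.dropLast.getLast h0) ≤ t.1 :=
              C.jIdx_le_of t.isLt hrel.2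
            omega
    -- ===== case: last cell is an old cell =====
    · rw [dBound_old hfree hxO]
      by_cases hcls : C.jIdx (l.getLast hne) < C.iIdx (l.getLast hne)
      · -- HIGH terminal run
        rw [if_pos hcls]
        obtain ⟨l₀, R, hRne, hsplit, hRmem, hl₀last⟩ :=
          split_terminal (fun y => decide (C.OldN y ∧ C.jIdx y < C.iIdx y)) l hne
            (by rw [decide_eq_true_eq]; exact ⟨hxO, hcls⟩)
        have hRmem' : ∀ y ∈ R, C.OldN y ∧ C.jIdx y < C.iIdx y := fun y hy =>
          of_decide_eq_true (hRmem y hy)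
        subst hsplit
        have hxR : (l₀ ++ R).getLast hne = R.getLast hRne := by
          rw [List.getLast_append]
          simp [hRne]
        obtain ⟨hcl₀, hcR, hlink⟩ := List.isChain_append.mp hchain
        rw [hxR] at hcls ⊢
        have hh₁ := hRmem' _ (List.head_mem hRne)
        have hx' := hRmem' _ (List.getLast_mem hRne)
        have hj₁k : C.jIdx (R.head hRne) < C.k := by
          have := iIdx_le (C := C) (R.head hRne)
          omega
        have hidk := iIdx_le (C := C) (R.getLast hRne)
        have hFm := sandwich_bound (C := C) (C.jIdx (R.head hRne)) (C.iIdx (R.getLast hRne))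
          (by omega) hidk R hRne hcR
          (fun y hy => (hRmem' y hy).1.1)
          (by
            intro hj0
            obtain ⟨hh, hlt⟩ := C.iIdx_gt_strict hh₁.1
              (show C.jIdx (R.head hRne) - 1 < C.iIdx (R.head hRne) by omega)
            obtain ⟨hh2, hlt2⟩ := C.jIdx_gt_strict hh₁.1
              (show C.jIdx (R.head hRne) - 1 < C.jIdx (R.head hRne) by omega)
            exact ⟨hlt, hlt2⟩)
          (by
            intro hb
            refine ⟨iIdx_spec hb, ?_⟩
            have h4 : (C.S ⟨C.jIdx (R.getLast hRne), by omega⟩).2 < (R.getLast hRne).2 :=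
              jIdx_spec (by omega)
            have h5 : (C.S ⟨C.iIdx (R.getLast hRne), hb⟩).2 <
                (C.S ⟨C.jIdx (R.getLast hRne), by omega⟩).2 :=
              C.Srow (by rw [Fin.mk_lt_mk]; omega)
            omega)
        rcases eq_or_ne l₀ [] with hl0 | hl0
        · subst hl0
          simp only [List.nil_append, List.length_nil] at *
          omega
        · have hwrel : Rel (l₀.getLast hl0) (R.head hRne) :=
            hlink _ (by rw [List.getLast?_eq_getLast hl0]; exact Option.mem_some_iff.mpr rfl)
              _ (by rw [List.head?_eq_head hRne]; exact Option.mem_some_iff.mpr rfl)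
          have hwQ : C.QL (l₀.getLast hl0) :=
            hmem _ (List.mem_append_left _ (List.getLast_mem hl0))
          have hRpos := List.length_pos_iff.mpr hRne
          have hIH := ih l₀ (by
              simp only [List.length_append] at hlen
              omega)
            hcl₀ (fun p hp => hmem p (List.mem_append_left _ hp)) hl0
          have hbound : C.dBound (l₀.getLast hl0) ≤ C.jIdx (R.head hRne) := by
            rcases C.QL_trichotomy hfree hwQ with ⟨μ', hwN⟩ | ⟨u, hwS⟩ | hwO
            · rw [dBound_new μ' hwN]
              have h7 : (C.S ⟨C.jIdx (R.head hRne), hj₁k⟩).2 < (C.S μ').2 := by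
                have h8 := jIdx_spec (C := C) (x := R.head hRne) hj₁k
                have h9 := hwrel.2
                rw [hwN] at h9
                have h10 : (C.NL μ').2 = (C.S μ').2 := C.NLrow μ'
                rw [h10] at h9
                omega
              have h11 : μ'.1 < C.jIdx (R.head hRne) := C.Srow_reflect h7
              omega
            · rw [dBound_S hfree u hwS]
              have h7 : (C.S ⟨C.jIdx (R.head hRne), hj₁k⟩).2 < (C.S u).2 := by
                have h8 := jIdx_spec (C := C) (x := R.head hRne) hj₁k
                have h9 := hwrel.2
                rw [hwS] at h9
                omega
              have h11 : u.1 < C.jIdx (R.head hRne) := C.Srow_reflect h7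
              omega
            · have hnothigh := hl₀last hl0
              rw [decide_eq_false_iff_not] at hnothigh
              rw [dBound_old hfree hwO]
              rw [if_neg (fun hc => hnothigh ⟨hwO, hc⟩)]
              exact jIdx_anti (le_of_lt hwrel.2)
          simp only [List.length_append]
          omega
      · -- LOW terminal run
        rw [if_neg hcls]
        obtain ⟨l₀, R, hRne, hsplit, hRmem, hl₀last⟩ :=
          split_terminal (fun y => decide (C.OldN y ∧ ¬ C.jIdx y < C.iIdx y)) l hne
            (by rw [decide_eq_true_eq]; exact ⟨hxO, hcls⟩)
        have hRmem' : ∀ y ∈ R, C.OldN y ∧ ¬ C.jIdx y < C.iIdx y := fun y hy =>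
          of_decide_eq_true (hRmem y hy)
        subst hsplit
        have hxR : (l₀ ++ R).getLast hne = R.getLast hRne := by
          rw [List.getLast_append]
          simp [hRne]
        obtain ⟨hcl₀, hcR, hlink⟩ := List.isChain_append.mp hchain
        rw [hxR] at hcls ⊢
        have hh₁ := hRmem' _ (List.head_mem hRne)
        have hx' := hRmem' _ (List.getLast_mem hRne)
        have hsh₁ := low_sharp hflex hh₁.1 hh₁.2
        have hshx := low_sharp hflex hx'.1 hx'.2
        have hjdk := jIdx_le (C := C) (R.getLast hRne)
        have hj₁k := jIdx_le (C := C) (R.head hRne)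
        have hi₁k : C.iIdx (R.head hRne) < C.k := by omega
        have hFm := sandwich_shaveS hflex (C.iIdx (R.head hRne)) (C.jIdx (R.getLast hRne))
          hi₁k hjdk R hRne hcR
          (fun y hy => (hRmem' y hy).1.1)
          (by
            intro h0
            obtain ⟨hh, hlt⟩ := C.iIdx_gt_strict hh₁.1
              (show C.iIdx (R.head hRne) - 1 < C.iIdx (R.head hRne) by omega)
            obtain ⟨hh2, hlt2⟩ := C.jIdx_gt_strict hh₁.1
              (show C.iIdx (R.head hRne) - 1 < C.jIdx (R.head hRne) by omega)
            exact ⟨hlt, hlt2⟩)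
          (by
            intro hb
            refine ⟨?_, jIdx_spec hb⟩
            have h2 : (R.getLast hRne).1 < (C.S ⟨C.iIdx (R.getLast hRne), by omega⟩).1 :=
              iIdx_spec (by omega)
            have h3 : (C.S ⟨C.iIdx (R.getLast hRne), by omega⟩).1 ≤
                (C.S ⟨C.jIdx (R.getLast hRne), hb⟩).1 :=
              C.Scol_le (by rw [Fin.mk_le_mk]; omega)
            omega)
          (by
            obtain ⟨hh, hlt⟩ := C.jIdx_gt_strict hh₁.1
              (show C.iIdx (R.head hRne) < C.jIdx (R.head hRne) by omega)
            exact hlt)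
        rcases eq_or_ne l₀ [] with hl0 | hl0
        · subst hl0
          simp only [List.nil_append, List.length_nil] at *
          omega
        · have hwrel : Rel (l₀.getLast hl0) (R.head hRne) :=
            hlink _ (by rw [List.getLast?_eq_getLast hl0]; exact Option.mem_some_iff.mpr rfl)
              _ (by rw [List.head?_eq_head hRne]; exact Option.mem_some_iff.mpr rfl)
          have hwQ : C.QL (l₀.getLast hl0) :=
            hmem _ (List.mem_append_left _ (List.getLast_mem hl0))
          have hRpos := List.length_pos_iff.mpr hRne
          have hIH := ih l₀ (by
              simp only [List.length_append] at hlen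
              omega)
            hcl₀ (fun p hp => hmem p (List.mem_append_left _ hp)) hl0
          have hbound : C.dBound (l₀.getLast hl0) ≤ C.iIdx (R.head hRne) + 1 := by
            rcases C.QL_trichotomy hfree hwQ with ⟨μ', hwN⟩ | ⟨u, hwS⟩ | hwO
            · rw [dBound_new μ' hwN]
              rcases Nat.eq_zero_or_pos μ'.1 with h0' | hpos'
              · omega
              · by_contra hcon
                have h7 : C.iIdx (R.head hRne) ≤ μ'.1 - 1 := by omega
                have h8 : (C.S ⟨C.iIdx (R.head hRne), hi₁k⟩).1 ≤ (C.S ⟨μ'.1 - 1, by omega⟩).1 :=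
                  C.Scol_le (by rw [Fin.mk_le_mk]; omega)
                have h9 := iIdx_spec (C := C) (x := R.head hRne) hi₁k
                have h10 := hwrel.1
                rw [hwN, C.NLcolpos hpos'] at h10
                omega
            · rw [dBound_S hfree u hwS]
              by_contra hcon
              have h8 : (C.S ⟨C.iIdx (R.head hRne), hi₁k⟩).1 ≤ (C.S u).1 := by
                have : (⟨C.iIdx (R.head hRne), hi₁k⟩ : Fin C.k) ≤ u := by
                  rw [Fin.le_def]; simp; omega
                exact C.Scol_le this
              have h9 := iIdx_spec (C := C) (x := R.head hRne) hi₁k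
              have h10 := hwrel.1
              rw [hwS] at h10
              omega
            · have hnotlow := hl₀last hl0
              rw [decide_eq_false_iff_not] at hnotlow
              rw [dBound_old hfree hwO]
              have hwhigh : C.jIdx (l₀.getLast hl0) < C.iIdx (l₀.getLast hl0) := by
                by_contra hc
                exact hnotlow ⟨hwO, hc⟩
              rw [if_pos hwhigh]
              have := iIdx_mono (C := C) (le_of_lt hwrel.1)
              omega
          simp only [List.length_append]
          omega

end Ctx

end ShiftWork

namespace ShiftWork

namespace Ctx

variable {C : Ctx}

lemma leftShift_sub {p : Cell}
    (hp : p ∈ colRestrict C.a C.b (leftShift C.a C.k C.S C.P)) : C.QL p := by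
  obtain ⟨hmem, hcol⟩ := Finset.mem_filter.mp hp
  rcases Finset.mem_union.mp hmem with h | h
  · exact Or.inl (Finset.mem_filter.mpr ⟨(Finset.mem_sdiff.mp h).1, hcol⟩)
  · obtain ⟨μ, -, hμ⟩ := Finset.mem_image.mp h
    exact Or.inr ⟨μ, hμ.symm⟩

lemma dConclusion (hfree : ∀ p ∈ C.P, p.1 ≠ C.a) (hflex : C.FlexS) (hab : C.a ≤ C.b) :
    IsMaxDec C.a C.b (leftShift C.a C.k C.S C.P) C.k (shiftLSeq C.a C.k C.S) := by
  constructor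
  · -- part 1: the shifted sequence is a decreasing sequence of the shifted placement
    constructor
    · intro μ
      refine Finset.mem_filter.mpr ⟨?_, ?_, ?_⟩
      · exact Finset.mem_union_right _ (Finset.mem_image.mpr ⟨μ, Finset.mem_univ μ, rfl⟩)
      · exact C.QL_col_ge (Or.inr ⟨μ, rfl⟩)
      · rcases Nat.eq_zero_or_pos μ.1 with h0 | hpos
        · have : (C.NL μ).1 = C.a := C.NLcol0 h0
          rw [show (shiftLSeq C.a C.k C.S μ).1 = (C.NL μ).1 from rfl, this]
          exact hab
        · have : (C.NL μ).1 = (C.S ⟨μ.1 - 1, by omega⟩).1 := C.NLcolpos hpos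
          rw [show (shiftLSeq C.a C.k C.S μ).1 = (C.NL μ).1 from rfl, this]
          exact C.Scol_lb _
    · intro i j hij
      constructor
      · show (C.NL i).1 < (C.NL j).1
        have hjpos : 0 < j.1 := by
          have : i.1 < j.1 := hij
          omega
        rw [C.NLcolpos hjpos]
        rcases Nat.eq_zero_or_pos i.1 with h0 | hpos
        · rw [C.NLcol0 h0]
          have h1 := C.Scol_ge ⟨j.1 - 1, by omega⟩
          have h2 := hfree _ (C.SmemP ⟨j.1 - 1, by omega⟩)
          omega
        · rw [C.NLcolpos hpos]
          apply C.Scol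
          rw [Fin.mk_lt_mk]
          have : i.1 < j.1 := hij
          omega
      · show (C.S j).2 < (C.S i).2
        exact C.Srow hij
  · -- part 2: maximality
    intro lT T hT
    have hchain := chain'_ofFn T _ hT
    have hmem : ∀ p ∈ List.ofFn T, C.QL p := by
      intro p hp
      obtain ⟨i, hi⟩ := List.mem_ofFn.mp hp
      exact leftShift_sub (hi ▸ hT.1 i)
    rcases eq_or_ne (List.ofFn T) [] with hnil | hne
    · have : lT = 0 := by
        have := congrArg List.length hnil
        simpa using this
      omega
    · have h1 := dMain hfree hflex (List.ofFn T).length (List.ofFn T) le_rfl hchain hmem hne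
      have h2 := dBound_le_k hfree (hmem _ (List.getLast_mem hne))
      have h3 : (List.ofFn T).length = lT := by simp
      omega

end Ctx

end ShiftWork

namespace ShiftWork

namespace Ctx

variable (C : Ctx)

/-! ### D-case : right shift -/

noncomputable def NR : Fin C.k → Cell := shiftRSeq C.b C.k C.S

lemma NRrow (μ : Fin C.k) : (C.NR μ).2 = (C.S μ).2 := rfl

lemma NRcolend {μ : Fin C.k} (h : ¬ μ.1 + 1 < C.k) : (C.NR μ).1 = C.b := by
  simp [NR, shiftRSeq, h]

lemma NRcoltop {μ : Fin C.k} (h : μ.1 + 1 < C.k) :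
    (C.NR μ).1 = (C.S ⟨μ.1 + 1, h⟩).1 := by
  simp [NR, shiftRSeq, h]

variable {C}

lemma NR_inj {μ μ' : Fin C.k} (h : C.NR μ = C.NR μ') : μ = μ' := by
  have h2 : (C.S μ).2 = (C.S μ').2 := by
    have := congrArg Prod.snd h
    rwa [C.NRrow, C.NRrow] at this
  rcases lt_trichotomy μ μ' with h1 | h1 | h1
  · exact absurd (C.Srow h1) (by omega)
  · exact h1
  · exact absurd (C.Srow h1) (by omega)

lemma NR_ne_S (hfree : ∀ p ∈ C.P, p.1 ≠ C.b) (μ t : Fin C.k) : C.NR μ ≠ C.S t := by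
  intro h
  by_cases htop : μ.1 + 1 < C.k
  · have hcol : (C.S t).1 = (C.S ⟨μ.1 + 1, htop⟩).1 := by
      rw [← h, C.NRcoltop htop]
    have ht : t = ⟨μ.1 + 1, htop⟩ := by
      rcases lt_trichotomy t ⟨μ.1 + 1, htop⟩ with h1 | h1 | h1
      · exact absurd (C.Scol h1) (by omega)
      · exact h1
      · exact absurd (C.Scol h1) (by omega)
    have hrow : (C.S μ).2 = (C.S t).2 := by rw [← h]; rfl
    rw [ht] at hrow
    have hne : μ ≠ (⟨μ.1 + 1, htop⟩ : Fin C.k) := by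
      intro hc
      have := congrArg Fin.val hc
      simp at this
    rcases lt_or_gt_of_ne hne with h1 | h1
    · exact absurd (C.Srow h1) (by omega)
    · exact absurd (C.Srow h1) (by omega)
  · have hcol : (C.S t).1 = C.b := by rw [← h, C.NRcolend htop]
    exact hfree _ (C.SmemP t) hcol

lemma NR_notin (hfree : ∀ p ∈ C.P, p.1 ≠ C.b) (μ : Fin C.k) :
    C.NR μ ∉ colRestrict C.a C.b C.P := by
  intro hmem
  have hP : C.NR μ ∈ C.P := (Finset.mem_filter.mp hmem).1
  by_cases htop : μ.1 + 1 < C.k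
  · have hcol : (C.NR μ).1 = (C.S ⟨μ.1 + 1, htop⟩).1 := C.NRcoltop htop
    have := C.colinj _ hP _ (C.SmemP ⟨μ.1 + 1, htop⟩) hcol
    exact NR_ne_S hfree μ ⟨μ.1 + 1, htop⟩ this
  · exact hfree _ hP (C.NRcolend htop)

/-- Ground set for the D-case chains. -/
def QR (C : Ctx) (x : Cell) : Prop :=
  x ∈ colRestrict C.a C.b C.P ∨ ∃ μ : Fin C.k, x = C.NR μ

lemma QR_col_le {x : Cell} (hx : C.QR x) : x.1 ≤ C.b := by
  rcases hx with h | ⟨μ, rfl⟩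
  · exact (Finset.mem_filter.mp h).2.2
  · by_cases htop : μ.1 + 1 < C.k
    · rw [C.NRcoltop htop]
      exact C.Scol_lb _
    · rw [C.NRcolend htop]

lemma QR_trichotomy (hfree : ∀ p ∈ C.P, p.1 ≠ C.b) {x : Cell} (hx : C.QR x) :
    (∃ μ : Fin C.k, x = C.NR μ) ∨ (∃ t : Fin C.k, x = C.S t) ∨ C.OldN x := by
  rcases hx with h | h
  · by_cases hS : ∃ t : Fin C.k, x = C.S t
    · exact Or.inr (Or.inl hS)
    · push_neg at hS
      exact Or.inr (Or.inr ⟨h, hS⟩)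
  · exact Or.inl h

variable (C)

/-- Bound assigned to the first cell of a D-case chain. -/
noncomputable def DBound (x : Cell) : ℕ :=
  if h : ∃ μ : Fin C.k, x = C.NR μ then C.k - h.choose.1
  else if h2 : ∃ t : Fin C.k, x = C.S t then C.k - h2.choose.1
  else if C.jIdx x + 1 < C.iIdx x then C.k - C.jIdx x else C.k - C.iIdx x

variable {C}

lemma DBound_new {x : Cell} (μ : Fin C.k) (hx : x = C.NR μ) : C.DBound x = C.k - μ.1 := by
  have h : ∃ μ : Fin C.k, x = C.NR μ := ⟨μ, hx⟩
  rw [DBound, dif_pos h]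
  have := h.choose_spec
  have : h.choose = μ := NR_inj (by rw [← this, ← hx])
  rw [this]

lemma DBound_S (hfree : ∀ p ∈ C.P, p.1 ≠ C.b) {x : Cell} (t : Fin C.k)
    (hx : x = C.S t) : C.DBound x = C.k - t.1 := by
  have hnot : ¬ ∃ μ : Fin C.k, x = C.NR μ := by
    rintro ⟨μ, hμ⟩
    exact NR_ne_S hfree μ t (by rw [← hμ, hx])
  have h2 : ∃ u : Fin C.k, x = C.S u := ⟨t, hx⟩
  rw [DBound, dif_neg hnot, dif_pos h2]
  have := h2.choose_spec
  have : h2.choose = t := C.Sinj (by rw [← this, ← hx])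
  rw [this]

lemma DBound_old (hfree : ∀ p ∈ C.P, p.1 ≠ C.b) {x : Cell} (hx : C.OldN x) :
    C.DBound x = if C.jIdx x + 1 < C.iIdx x then C.k - C.jIdx x else C.k - C.iIdx x := by
  have hnot : ¬ ∃ μ : Fin C.k, x = C.NR μ := by
    rintro ⟨μ, hμ⟩
    exact NR_notin hfree μ (hμ ▸ hx.1)
  have hnot2 : ¬ ∃ t : Fin C.k, x = C.S t := by
    rintro ⟨t, ht⟩
    exact hx.2 t ht
  rw [DBound, dif_neg hnot, dif_neg hnot2]

lemma DBound_le_k {x : Cell} : C.DBound x ≤ C.k := by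
  rw [DBound]
  split
  · omega
  split
  · omega
  split <;> omega

lemma low_sharpD (hflex : C.FlexD) {x : Cell} (hx : C.OldN x)
    (h : ¬ C.jIdx x + 1 < C.iIdx x) : C.iIdx x + 1 ≤ C.jIdx x := by
  have h1 := C.FD1 hx
  have h2 := FD2D hflex hx
  omega

end Ctx

end ShiftWork

namespace ShiftWork

namespace Ctx

variable {C : Ctx}

lemma DMain (hfree : ∀ p ∈ C.P, p.1 ≠ C.b) (hflex : C.FlexD) :
    ∀ (nn : ℕ) (l : List Cell), l.length ≤ nn → l.Chain' Rel →
      (∀ p ∈ l, C.QR p) → ∀ hne : l ≠ [],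
      l.length ≤ C.DBound (l.head hne) := by
  intro nn
  induction nn with
  | zero =>
    intro l hl _ _ hne
    exact absurd (List.length_eq_zero_iff.mp (Nat.le_zero.mp hl)) hne
  | succ nn ih =>
    intro l hlen hchain hmem hne
    have hpos : 0 < l.length := List.length_pos_iff.mpr hne
    have htl : l.tail.length = l.length - 1 := List.length_tail (l := l)
    have hxQ := hmem _ (List.head_mem hne)
    rcases C.QR_trichotomy hfree hxQ with ⟨μ, hxN⟩ | ⟨t, hxS⟩ | hxO
    -- ===== case: first cell is a new cell =====
    · rw [DBound_new μ hxN]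
      rcases head_split l hne hchain with h0 | ⟨h0, hrel⟩
      · have h1 := congrArg List.length h0
        simp at h1
        have := μ.isLt
        omega
      · rw [hxN] at hrel
        have hwQ : C.QR _ := hmem _ ((List.tail_sublist l).subset (List.head_mem h0))
        have hIH := ih l.tail (by omega)
          (hchain.sublist (List.tail_sublist l))
          (fun p hp => hmem p ((List.tail_sublist l).subset hp)) h0
        by_cases htop : μ.1 + 1 < C.k
        · have hxcol := C.NRcoltop htop
          suffices hsuff : C.DBound (l.tail.head h0) ≤ C.k - μ.1 - 1 by omega
          rcases C.QR_trichotomy hfree hwQ with ⟨μ'', hwN⟩ | ⟨u, hwS⟩ | hwO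
          · rw [DBound_new μ'' hwN]
            by_cases htop' : μ''.1 + 1 < C.k
            · have h1 : (C.S ⟨μ.1 + 1, htop⟩).1 < (C.S ⟨μ''.1 + 1, htop'⟩).1 := by
                have h2 := hrel.1
                rw [hxcol, hwN, C.NRcoltop htop'] at h2
                exact h2
              have h2 : μ.1 + 1 < μ''.1 + 1 := C.Scol_reflect h1
              omega
            · have := μ''.isLt
              omega
          · rw [DBound_S hfree u hwS]
            have h1 : (C.S ⟨μ.1 + 1, htop⟩).1 < (C.S u).1 := by
              have h2 := hrel.1
              rw [hxcol, hwS] at h2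
              exact h2
            have h2 : μ.1 + 1 < u.1 := C.Scol_reflect h1
            omega
          · rw [DBound_old hfree hwO]
            split
            · -- successor high : jIdx z ≥ μ + 1
              have h1 : μ.1 + 1 ≤ C.jIdx (l.tail.head h0) := by
                apply le_jIdx (by omega)
                intro t' ht'
                have h2 : (C.S μ).2 ≤ (C.S ⟨t', by omega⟩).2 :=
                  C.Srow_le (by rw [Fin.le_def]; simp; omega)
                have h3 := hrel.2
                have h4 : (C.NR μ).2 = (C.S μ).2 := C.NRrow μ
                rw [h4] at h3
                omega
              omega
            · -- successor low : iIdx z ≥ μ + 2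
              have h1 : μ.1 + 2 ≤ C.iIdx (l.tail.head h0) := by
                apply le_iIdx (by omega)
                intro t' ht'
                have h2 : (C.S ⟨t', by omega⟩).1 ≤ (C.S ⟨μ.1 + 1, htop⟩).1 :=
                  C.Scol_le (by rw [Fin.le_def]; simp; omega)
                have h3 := hrel.1
                rw [hxcol] at h3
                omega
              omega
        · exfalso
          have h2 := C.QR_col_le hwQ
          have h3 := hrel.1
          rw [C.NRcolend htop] at h3
          omega
    -- ===== case: first cell is a cell of S =====
    · rw [DBound_S hfree t hxS]
      rcases head_split l hne hchain with h0 | ⟨h0, hrel⟩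
      · have h1 := congrArg List.length h0
        simp at h1
        have := t.isLt
        omega
      · rw [hxS] at hrel
        have hwQ : C.QR _ := hmem _ ((List.tail_sublist l).subset (List.head_mem h0))
        have hIH := ih l.tail (by omega)
          (hchain.sublist (List.tail_sublist l))
          (fun p hp => hmem p ((List.tail_sublist l).subset hp)) h0
        suffices hsuff : C.DBound (l.tail.head h0) ≤ C.k - t.1 - 1 by omega
        rcases C.QR_trichotomy hfree hwQ with ⟨μ'', hwN⟩ | ⟨u, hwS⟩ | hwO
        · rw [DBound_new μ'' hwN]
          have h1 : (C.S μ'').2 < (C.S t).2 := by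
            have h2 := hrel.2
            rw [hwN] at h2
            have h3 : (C.NR μ'').2 = (C.S μ'').2 := C.NRrow μ''
            rw [h3] at h2
            exact h2
          have h2 : t.1 < μ''.1 := C.Srow_reflect h1
          omega
        · rw [DBound_S hfree u hwS]
          have h1 : (C.S t).1 < (C.S u).1 := by
            have h2 := hrel.1
            rw [hwS] at h2
            exact h2
          have h2 : t.1 < u.1 := C.Scol_reflect h1
          omega
        · rw [DBound_old hfree hwO]
          split
          · have h1 : t.1 + 1 ≤ C.jIdx (l.tail.head h0) := by
              apply le_jIdx (by omega)
              intro t' ht'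
              have h2 : (C.S t).2 ≤ (C.S ⟨t', by omega⟩).2 :=
                C.Srow_le (by rw [Fin.le_def]; simp; omega)
              have h3 := hrel.2
              omega
            omega
          · have h1 : t.1 + 1 ≤ C.iIdx (l.tail.head h0) := by
              apply le_iIdx (by omega)
              intro t' ht'
              have h2 : (C.S ⟨t', by omega⟩).1 ≤ (C.S t).1 :=
                C.Scol_le (by rw [Fin.le_def]; simp; omega)
              have h3 := hrel.1
              omega
            omega
    -- ===== case: first cell is an old cell =====
    · rw [DBound_old hfree hxO]
      by_cases hcls : C.jIdx (l.head hne) + 1 < C.iIdx (l.head hne)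
      · -- HIGH initial run (with shave)
        rw [if_pos hcls]
        obtain ⟨R, T', hRne, hsplit, hRmem, hT'head⟩ :=
          split_initial (fun y => decide (C.OldN y ∧ C.jIdx y + 1 < C.iIdx y)) l hne
            (by rw [decide_eq_true_eq]; exact ⟨hxO, hcls⟩)
        have hRmem' : ∀ y ∈ R, C.OldN y ∧ C.jIdx y + 1 < C.iIdx y := fun y hy =>
          of_decide_eq_true (hRmem y hy)
        subst hsplit
        have hxh : (R ++ T').head hne = R.head hRne := List.head_append_of_ne_nil hRne
        obtain ⟨hcR, hcT, hlink⟩ := List.isChain_append.mp hchain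
        rw [hxh] at hcls ⊢
        have hh₁ := hRmem' _ (List.head_mem hRne)
        have hxd := hRmem' _ (List.getLast_mem hRne)
        have hik1 := iIdx_le (C := C) (R.head hRne)
        have hikd := iIdx_le (C := C) (R.getLast hRne)
        have hj₁k : C.jIdx (R.head hRne) < C.k := by omega
        have hFm := sandwich_shaveD hflex (C.jIdx (R.head hRne)) (C.iIdx (R.getLast hRne))
          hj₁k hikd R hRne hcR
          (fun y hy => (hRmem' y hy).1.1)
          (by
            intro hj0
            obtain ⟨hh, hlt⟩ := C.iIdx_gt_strict hh₁.1
              (show C.jIdx (R.head hRne) - 1 < C.iIdx (R.head hRne) by omega)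
            obtain ⟨hh2, hlt2⟩ := C.jIdx_gt_strict hh₁.1
              (show C.jIdx (R.head hRne) - 1 < C.jIdx (R.head hRne) by omega)
            exact ⟨hlt, hlt2⟩)
          (by
            intro hb
            refine ⟨iIdx_spec hb, ?_⟩
            have h4 : (C.S ⟨C.jIdx (R.getLast hRne), by omega⟩).2 < (R.getLast hRne).2 :=
              jIdx_spec (by omega)
            have h5 : (C.S ⟨C.iIdx (R.getLast hRne), hb⟩).2 <
                (C.S ⟨C.jIdx (R.getLast hRne), by omega⟩).2 :=
              C.Srow (by rw [Fin.mk_lt_mk]; omega)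
            omega)
          (jIdx_spec hj₁k)
        rcases eq_or_ne T' [] with hT0 | hT0
        · subst hT0
          simp only [List.append_nil] at *
          omega
        · have hwrel : Rel (R.getLast hRne) (T'.head hT0) :=
            hlink _ (by rw [List.getLast?_eq_getLast hRne]; exact Option.mem_some_iff.mpr rfl)
              _ (by rw [List.head?_eq_head hT0]; exact Option.mem_some_iff.mpr rfl)
          have hwQ : C.QR (T'.head hT0) :=
            hmem _ (List.mem_append_right _ (List.head_mem hT0))
          have hRpos := List.length_pos_iff.mpr hRne
          have hIH := ih T' (by
              simp only [List.length_append] at hlen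
              omega)
            hcT (fun p hp => hmem p (List.mem_append_right _ hp)) hT0
          have hbound : C.DBound (T'.head hT0) + 1 ≤ C.k - C.iIdx (R.getLast hRne) + 2 := by
            rcases C.QR_trichotomy hfree hwQ with ⟨μ'', hwN⟩ | ⟨u, hwS⟩ | hwO
            · rw [DBound_new μ'' hwN]
              by_cases htop : μ''.1 + 1 < C.k
              · have h7 : C.iIdx (R.getLast hRne) ≤ μ''.1 + 1 :=
                  C.iIdx_le_of htop (by
                    have h8 := hwrel.1
                    rw [hwN, C.NRcoltop htop] at h8
                    exact h8)
                omega
              · have := μ''.isLt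
                omega
            · rw [DBound_S hfree u hwS]
              have h7 : C.iIdx (R.getLast hRne) ≤ u.1 :=
                C.iIdx_le_of u.isLt (by
                  have h8 := hwrel.1
                  rw [hwS] at h8
                  exact h8)
              omega
            · have hnothigh := hT'head hT0
              rw [decide_eq_false_iff_not] at hnothigh
              rw [DBound_old hfree hwO]
              rw [if_neg (fun hc => hnothigh ⟨hwO, hc⟩)]
              have h7 := iIdx_mono (C := C) (le_of_lt hwrel.1)
              omega
          simp only [List.length_append]
          omega
      · -- LOW initial run (no shave)
        rw [if_neg hcls]
        obtain ⟨R, T', hRne, hsplit, hRmem, hT'head⟩ :=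
          split_initial (fun y => decide (C.OldN y ∧ ¬ C.jIdx y + 1 < C.iIdx y)) l hne
            (by rw [decide_eq_true_eq]; exact ⟨hxO, hcls⟩)
        have hRmem' : ∀ y ∈ R, C.OldN y ∧ ¬ C.jIdx y + 1 < C.iIdx y := fun y hy =>
          of_decide_eq_true (hRmem y hy)
        subst hsplit
        have hxh : (R ++ T').head hne = R.head hRne := List.head_append_of_ne_nil hRne
        obtain ⟨hcR, hcT, hlink⟩ := List.isChain_append.mp hchain
        rw [hxh] at hcls ⊢
        have hh₁ := hRmem' _ (List.head_mem hRne)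
        have hxd := hRmem' _ (List.getLast_mem hRne)
        have hsh₁ := low_sharpD hflex hh₁.1 hh₁.2
        have hshd := low_sharpD hflex hxd.1 hxd.2
        have hjdk := jIdx_le (C := C) (R.getLast hRne)
        have hj₁k := jIdx_le (C := C) (R.head hRne)
        have hFm := sandwich_bound (C := C) (C.iIdx (R.head hRne)) (C.jIdx (R.getLast hRne))
          (by omega) hjdk R hRne hcR
          (fun y hy => (hRmem' y hy).1.1)
          (by
            intro h0
            obtain ⟨hh, hlt⟩ := C.iIdx_gt_strict hh₁.1
              (show C.iIdx (R.head hRne) - 1 < C.iIdx (R.head hRne) by omega)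
            obtain ⟨hh2, hlt2⟩ := C.jIdx_gt_strict hh₁.1
              (show C.iIdx (R.head hRne) - 1 < C.jIdx (R.head hRne) by omega)
            exact ⟨hlt, hlt2⟩)
          (by
            intro hb
            refine ⟨?_, jIdx_spec hb⟩
            have h2 : (R.getLast hRne).1 < (C.S ⟨C.iIdx (R.getLast hRne), by omega⟩).1 :=
              iIdx_spec (by omega)
            have h3 : (C.S ⟨C.iIdx (R.getLast hRne), by omega⟩).1 ≤
                (C.S ⟨C.jIdx (R.getLast hRne), hb⟩).1 :=
              C.Scol_le (by rw [Fin.mk_le_mk]; omega)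
            omega)
        rcases eq_or_ne T' [] with hT0 | hT0
        · subst hT0
          simp only [List.append_nil] at *
          omega
        · have hwrel : Rel (R.getLast hRne) (T'.head hT0) :=
            hlink _ (by rw [List.getLast?_eq_getLast hRne]; exact Option.mem_some_iff.mpr rfl)
              _ (by rw [List.head?_eq_head hT0]; exact Option.mem_some_iff.mpr rfl)
          have hwQ : C.QR (T'.head hT0) :=
            hmem _ (List.mem_append_right _ (List.head_mem hT0))
          have hRpos := List.length_pos_iff.mpr hRne
          have hIH := ih T' (by
              simp only [List.length_append] at hlen
              omega)
            hcT (fun p hp => hmem p (List.mem_append_right _ hp)) hT0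
          have hbound : C.DBound (T'.head hT0) ≤ C.k - C.jIdx (R.getLast hRne) := by
            rcases C.QR_trichotomy hfree hwQ with ⟨μ'', hwN⟩ | ⟨u, hwS⟩ | hwO
            · rw [DBound_new μ'' hwN]
              have h7 : C.jIdx (R.getLast hRne) ≤ μ''.1 :=
                C.jIdx_le_of μ''.isLt (by
                  have h8 := hwrel.2
                  rw [hwN] at h8
                  have h9 : (C.NR μ'').2 = (C.S μ'').2 := C.NRrow μ''
                  rw [h9] at h8
                  exact h8)
              omega
            · rw [DBound_S hfree u hwS]
              have h7 : C.jIdx (R.getLast hRne) ≤ u.1 :=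
                C.jIdx_le_of u.isLt (by
                  have h8 := hwrel.2
                  rw [hwS] at h8
                  exact h8)
              omega
            · have hnotlow := hT'head hT0
              rw [decide_eq_false_iff_not] at hnotlow
              rw [DBound_old hfree hwO]
              have hwhigh : C.jIdx (T'.head hT0) + 1 < C.iIdx (T'.head hT0) := by
                by_contra hc
                exact hnotlow ⟨hwO, hc⟩
              rw [if_pos hwhigh]
              have h7 := jIdx_anti (C := C) (le_of_lt hwrel.2)
              omega
          simp only [List.length_append]
          omega

end Ctx

end ShiftWork

namespace ShiftWork

namespace Ctx

variable {C : Ctx}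

lemma rightShift_sub {p : Cell}
    (hp : p ∈ colRestrict C.a C.b (rightShift C.b C.k C.S C.P)) : C.QR p := by
  obtain ⟨hmem, hcol⟩ := Finset.mem_filter.mp hp
  rcases Finset.mem_union.mp hmem with h | h
  · exact Or.inl (Finset.mem_filter.mpr ⟨(Finset.mem_sdiff.mp h).1, hcol⟩)
  · obtain ⟨μ, -, hμ⟩ := Finset.mem_image.mp h
    exact Or.inr ⟨μ, hμ.symm⟩

lemma DConclusion (hfree : ∀ p ∈ C.P, p.1 ≠ C.b) (hflex : C.FlexD) (hab : C.a ≤ C.b) :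
    IsMaxDec C.a C.b (rightShift C.b C.k C.S C.P) C.k (shiftRSeq C.b C.k C.S) := by
  constructor
  · constructor
    · intro μ
      refine Finset.mem_filter.mpr ⟨?_, ?_, ?_⟩
      · exact Finset.mem_union_right _ (Finset.mem_image.mpr ⟨μ, Finset.mem_univ μ, rfl⟩)
      · by_cases htop : μ.1 + 1 < C.k
        · have : (C.NR μ).1 = (C.S ⟨μ.1 + 1, htop⟩).1 := C.NRcoltop htop
          rw [show (shiftRSeq C.b C.k C.S μ).1 = (C.NR μ).1 from rfl, this]
          exact C.Scol_ge _
        · have : (C.NR μ).1 = C.b := C.NRcolend htop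
          rw [show (shiftRSeq C.b C.k C.S μ).1 = (C.NR μ).1 from rfl, this]
          exact hab
      · exact C.QR_col_le (Or.inr ⟨μ, rfl⟩)
    · intro i j hij
      constructor
      · show (C.NR i).1 < (C.NR j).1
        have hij' : i.1 < j.1 := hij
        have hitop : i.1 + 1 < C.k := by
          have := j.isLt
          omega
        rw [C.NRcoltop hitop]
        by_cases hjtop : j.1 + 1 < C.k
        · rw [C.NRcoltop hjtop]
          apply C.Scol
          rw [Fin.mk_lt_mk]
          omega
        · rw [C.NRcolend hjtop]
          have h1 := C.Scol_lb ⟨i.1 + 1, hitop⟩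
          have h2 := hfree _ (C.SmemP ⟨i.1 + 1, hitop⟩)
          omega
      · show (C.S j).2 < (C.S i).2
        exact C.Srow hij
  · intro lT T hT
    have hchain := chain'_ofFn T _ hT
    have hmem : ∀ p ∈ List.ofFn T, C.QR p := by
      intro p hp
      obtain ⟨i, hi⟩ := List.mem_ofFn.mp hp
      exact rightShift_sub (hi ▸ hT.1 i)
    rcases eq_or_ne (List.ofFn T) [] with hnil | hne
    · have : lT = 0 := by
        have := congrArg List.length hnil
        simpa using this
      omega
    · have h1 := DMain hfree hflex (List.ofFn T).length (List.ofFn T) le_rfl hchain hmem hne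
      have h2 : C.DBound ((List.ofFn T).head hne) ≤ C.k := DBound_le_k
      have h3 : (List.ofFn T).length = lT := by simp
      omega

end Ctx

end ShiftWork

namespace ShiftWork

lemma flexS_of {a b k : ℕ} {P : Finset Cell} {S : Fin k → Cell}
    (hlex : ∀ T : Fin k → Cell, IsDecSeq (colRestrict a b P) k T → rowLexLE k S T) :
    ∀ (T : Fin k → Cell), IsDecSeq (colRestrict a b P) k T →
      ∀ (α : Fin k), (∀ t, t < α → T t = S t) → ¬ ((T α).2 < (S α).2) := by
  intro T hT α hpre hdip
  rcases hlex T hT with hall | ⟨i₀, hi₀, hpre₀⟩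
  · have := hall α
    omega
  · rcases lt_trichotomy i₀ α with h1 | h1 | h1
    · have h2 := hpre i₀ h1
      rw [h2] at hi₀
      omega
    · subst h1
      omega
    · have h2 := hpre₀ α h1
      omega

lemma flexD_of {a b k : ℕ} {P : Finset Cell} {S : Fin k → Cell}
    (hlex : ∀ T : Fin k → Cell, IsDecSeq (colRestrict a b P) k T → rowLexLE k T S) :
    ∀ (T : Fin k → Cell), IsDecSeq (colRestrict a b P) k T →
      ∀ (α : Fin k), (∀ t, t < α → T t = S t) → ¬ ((S α).2 < (T α).2) := by
  intro T hT α hpre hdip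
  rcases hlex T hT with hall | ⟨i₀, hi₀, hpre₀⟩
  · have := hall α
    omega
  · rcases lt_trichotomy i₀ α with h1 | h1 | h1
    · have h2 := hpre i₀ h1
      rw [h2] at hi₀
      omega
    · subst h1
      omega
    · have h2 := hpre₀ α h1
      omega

end ShiftWork


/-- **Lemma.** If column `a` holds no cell of `P`, then `a ← d_{a,b}(P)` is a longest
decreasing sequence in `P(a ← d_{a,b}(P))|_{a,b}`; if column `b` holds no cell of `P`,
then `D_{a,b}(P) → b` is a longest decreasing sequence in `P(D_{a,b}(P) → b)|_{a,b}`. -/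
theorem shifted_is_longest (m n : ℕ) (P : Finset Cell) (hP : IsPlacement (Rect m n) P)
    (a b : ℕ) (ha1 : 1 ≤ a) (hab : a < b) (hbm : b ≤ m)
    (k : ℕ) (S : Fin k → Cell) :
    (((∀ p ∈ P, p.1 ≠ a) ∧ IsSmallestDec a b P k S) →
      IsMaxDec a b (leftShift a k S P) k (shiftLSeq a k S)) ∧
    (((∀ p ∈ P, p.1 ≠ b) ∧ IsLargestDec a b P k S) →
      IsMaxDec a b (rightShift b k S P) k (shiftRSeq b k S)) := by

  constructor
  · rintro ⟨hfree, ⟨⟨⟨hSmem, hSpair⟩, hmax⟩, hlex⟩⟩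
    let C : ShiftWork.Ctx := {
      P := P, a := a, b := b, k := k, S := S,
      colinj := hP.2.1, rowinj := hP.2.2,
      Smem := hSmem,
      Scol := fun {t u} h => (hSpair t u h).1,
      Srow := fun {t u} h => (hSpair t u h).2,
      maxL := fun l hc hm =>
        hmax l.length _ (ShiftWork.decseq_of_list (colRestrict a b P) l.length l rfl hc hm) }
    exact ShiftWork.Ctx.dConclusion (C := C) hfree (ShiftWork.flexS_of hlex) hab.le
  · rintro ⟨hfree, ⟨⟨⟨hSmem, hSpair⟩, hmax⟩, hlex⟩⟩
    let C : ShiftWork.Ctx := {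
      P := P, a := a, b := b, k := k, S := S,
      colinj := hP.2.1, rowinj := hP.2.2,
      Smem := hSmem,
      Scol := fun {t u} h => (hSpair t u h).1,
      Srow := fun {t u} h => (hSpair t u h).2,
      maxL := fun l hc hm =>
        hmax l.length _ (ShiftWork.decseq_of_list (colRestrict a b P) l.length l rfl hc hm) }
    exact ShiftWork.Ctx.DConclusion (C := C) hfree (ShiftWork.flexD_of hlex) hab.le
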